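/- Let X be a nonnegative random variable with CDF F_X and PDF f_X, and let ξ be inverse gamma with shape m ∈ ℕ, m ≥ 2, and mean 1, independent of X. Define W = w̄ ξ X with w̄ > 0. Then for u > 0, F_W(u) = Σ_{n=0}^{m−1} (m−1)^n w̄^n / (u^n n!) · φ_X^{(n)}((1−m) w̄ / u), where φ_X^{(n)}(s) = ∫₀^∞ x^n e^{xs} f_X(x) dx. -/

import Mathlib

open MeasureTheory Set Filter Topology
open scoped ENNReal
noncomputable def auxG (c : ℝ) (m : ℕ) (t : ℝ) : ℝ :=
  -∑ n ∈ Finset.range m, ((m - 1).factorial / n.factorial : ℝ) * c ^ n / c ^ m *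
      (t ^ n * Real.exp (-c * t))

lemma auxG_hasDeriv (c : ℝ) (hc : 0 < c) (m : ℕ) (hm : 1 ≤ m) (t : ℝ) :
    HasDerivAt (auxG c m) (t ^ (m - 1) * Real.exp (-c * t)) t := by
  have hE : HasDerivAt (fun t : ℝ => Real.exp (-c * t)) (Real.exp (-c * t) * -c) t := by
    simpa using ((hasDerivAt_id t).const_mul (-c)).exp
  have hterm : ∀ n : ℕ, HasDerivAt
      (fun t : ℝ => ((m - 1).factorial / n.factorial : ℝ) * c ^ n / c ^ m *
        (t ^ n * Real.exp (-c * t)))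
      (((m - 1).factorial / n.factorial : ℝ) * c ^ n / c ^ m *
        ((n : ℝ) * t ^ (n - 1) * Real.exp (-c * t) + t ^ n * (Real.exp (-c * t) * -c))) t :=
    fun n => ((hasDerivAt_pow n t).mul hE).const_mul _
  have h := (HasDerivAt.fun_sum (fun n (_ : n ∈ Finset.range m) => hterm n)).neg
  refine h.congr_deriv (Eq.symm ?_)
  set E := Real.exp (-c * t) with hE_def
  set f : ℕ → ℝ := fun n =>
    if n = 0 then 0 else ((m - 1).factorial / (n - 1).factorial : ℝ) * c ^ n / c ^ m *
      t ^ (n - 1) * E with hf_def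
  have key : ∀ n ∈ Finset.range m,
      -(((m - 1).factorial / n.factorial : ℝ) * c ^ n / c ^ m *
        ((n : ℝ) * t ^ (n - 1) * E + t ^ n * (E * -c))) = f (n + 1) - f n := by
    intro n _
    cases n with
    | zero => simp [hf_def, Nat.factorial]; ring
    | succ j =>
      have hfac : ((j + 1).factorial : ℝ) = (j + 1) * j.factorial := by
        rw [Nat.factorial_succ]; push_cast; ring
      simp only [hf_def, if_neg (Nat.succ_ne_zero j), if_neg (Nat.succ_ne_zero (j + 1)),
        Nat.succ_sub_one, Nat.add_sub_cancel]
      rw [hfac]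
      have h1 : (j.factorial : ℝ) ≠ 0 := Nat.cast_ne_zero.2 (Nat.factorial_ne_zero j)
      have h2 : ((j : ℝ) + 1) ≠ 0 := by positivity
      have h3 : c ^ m ≠ 0 := pow_ne_zero _ hc.ne'
      push_cast
      field_simp
      ring
  rw [← Finset.sum_neg_distrib, Finset.sum_congr rfl key, Finset.sum_range_sub]
  have hm0 : m ≠ 0 := by omega
  simp only [hf_def, if_neg hm0, if_pos rfl, sub_zero]
  rw [div_self (Nat.cast_ne_zero.2 (Nat.factorial_ne_zero (m - 1)) : ((m-1).factorial:ℝ) ≠ 0)]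
  rw [one_mul, div_self (pow_ne_zero m hc.ne')]
  ring

lemma auxG_tendsto (c : ℝ) (hc : 0 < c) (m : ℕ) :
    Tendsto (auxG c m) atTop (𝓝 0) := by
  have base : ∀ n : ℕ, Tendsto (fun t : ℝ => t ^ n * Real.exp (-c * t)) atTop (𝓝 0) := by
    intro n
    have h1 : Tendsto (fun t : ℝ => c * t) atTop atTop :=
      tendsto_id.const_mul_atTop hc
    have h2 := (Real.tendsto_pow_mul_exp_neg_atTop_nhds_zero n).comp h1
    have h3 := h2.const_mul ((c ^ n)⁻¹)
    rw [mul_zero] at h3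
    refine h3.congr fun x => ?_
    simp only [Function.comp_apply]
    rw [mul_pow, neg_mul]
    field_simp
  have hsum := tendsto_finset_sum (Finset.range m)
    (fun n (_ : n ∈ Finset.range m) =>
      (base n).const_mul (((m - 1).factorial / n.factorial : ℝ) * c ^ n / c ^ m))
  simp only [mul_zero, Finset.sum_const_zero] at hsum
  have h0 : Tendsto (fun x : ℝ =>
      -∑ n ∈ Finset.range m,
        ((m - 1).factorial / n.factorial : ℝ) * c ^ n / c ^ m * (x ^ n * Real.exp (-c * x)))
      atTop (𝓝 0) := by simpa using hsum.neg
  exact h0.congr fun t => rfl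

lemma tail_integrable (c : ℝ) (hc : 0 < c) (m : ℕ) (hm : 1 ≤ m) (a : ℝ) (ha : 0 ≤ a) :
    IntegrableOn (fun t : ℝ => t ^ (m - 1) * Real.exp (-c * t)) (Ioi a) :=
  integrableOn_Ioi_deriv_of_nonneg' (fun x _ => auxG_hasDeriv c hc m hm x)
    (fun x hx => mul_nonneg (pow_nonneg (ha.trans hx.le) _) (Real.exp_nonneg _))
    (auxG_tendsto c hc m)

lemma tail_eval (c : ℝ) (hc : 0 < c) (m : ℕ) (hm : 1 ≤ m) (a : ℝ) (ha : 0 ≤ a) :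
    ∫ t in Ioi a, t ^ (m - 1) * Real.exp (-c * t) =
      ∑ n ∈ Finset.range m, ((m - 1).factorial / n.factorial : ℝ) * c ^ n / c ^ m *
        a ^ n * Real.exp (-c * a) := by
  rw [integral_Ioi_of_hasDerivAt_of_nonneg' (fun x _ => auxG_hasDeriv c hc m hm x)
    (fun x hx => mul_nonneg (pow_nonneg (ha.trans hx.le) _) (Real.exp_nonneg _))
    (auxG_tendsto c hc m)]
  rw [zero_sub, auxG, neg_neg]
  exact Finset.sum_congr rfl fun n _ => by ring

/-- CDF of an inverse-gamma-based composite model with integer shape m ≥ 2, as a finite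
sum of GMGF evaluations of the underlying fading density (Corollary 1 of the paper). -/
theorem composite_cdf_integer_m (m : ℕ) (hm : 2 ≤ m) (w u : ℝ) (hw : 0 < w) (hu : 0 < u)
    (fX FX : ℝ → ℝ) (hf0 : ∀ x, 0 ≤ fX x) (hf1 : ∫ x in Ioi (0:ℝ), fX x = 1)
    (hFX : ∀ x, FX x = ∫ y in Ioc (0:ℝ) x, fX y)
    (hint : ∀ n, n < m →
      IntegrableOn (fun x => x ^ n * Real.exp (x * ((1 - (m:ℝ)) * w / u)) * fX x) (Ioi 0)) :
    ∫ t in Ioi (0:ℝ), FX (u * t / w) *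
        (((m:ℝ) - 1) ^ m / Real.Gamma (m:ℝ) * t ^ (m - 1) * Real.exp (-((m:ℝ) - 1) * t)) =
      ∑ n ∈ Finset.range m, ((m:ℝ) - 1) ^ n * w ^ n / (u ^ n * (n.factorial : ℝ)) *
        ∫ x in Ioi (0:ℝ), x ^ n * Real.exp (x * ((1 - (m:ℝ)) * w / u)) * fX x := by
  have hmn : 1 ≤ m := by omega
  have hm2 : (2:ℝ) ≤ (m:ℝ) := by exact_mod_cast hm
  set c : ℝ := (m:ℝ) - 1 with hc_def
  have hc : 0 < c := by rw [hc_def]; linarith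
  -- integrability of fX
  have hfXint : IntegrableOn fX (Ioi 0) := by
    by_contra h
    rw [MeasureTheory.integral_undef h] at hf1
    norm_num at hf1
  have hfXmeas : AEMeasurable fX (volume.restrict (Ioi (0:ℝ))) := hfXint.aemeasurable
  -- FX properties
  have hFX0 : ∀ x, 0 ≤ FX x := fun x => by
    rw [hFX x]; exact setIntegral_nonneg measurableSet_Ioc fun y _ => hf0 y
  have hFXmono : Monotone FX := by
    intro x x' hxx'
    rw [hFX x, hFX x']
    refine setIntegral_mono_set (hfXint.mono_set fun y hy => hy.1)
      (Eventually.of_forall fun y => hf0 y) ((Ioc_subset_Ioc_right hxx').eventuallyLE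
      )
  have hFXmeas : Measurable FX := hFXmono.measurable
  -- tail function
  set T : ℝ → ℝ := fun y => ∫ t in Ioi (w * y / u), t ^ (m - 1) * Real.exp (-c * t) with hT_def
  have hT : ∀ y : ℝ, 0 ≤ y → T y =
      ∑ n ∈ Finset.range m, ((m - 1).factorial / n.factorial : ℝ) * c ^ n / c ^ m *
        (w * y / u) ^ n * Real.exp (-c * (w * y / u)) := fun y hy =>
    tail_eval c hc m hmn (w * y / u) (by positivity)
  -- pointwise identity on Ioi 0
  have hpt : ∀ y ∈ Ioi (0:ℝ), fX y * T y =
      ∑ n ∈ Finset.range m, (((m - 1).factorial / n.factorial : ℝ) * c ^ n / c ^ m *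
        (w / u) ^ n) * (y ^ n * Real.exp (y * ((1 - (m:ℝ)) * w / u)) * fX y) := by
    intro y hy
    rw [hT y (le_of_lt hy)]
    rw [Finset.mul_sum]
    refine Finset.sum_congr rfl fun n _ => ?_
    rw [show y * ((1 - (m:ℝ)) * w / u) = -c * (w * y / u) by rw [hc_def]; ring]
    ring
  -- integrability of each term
  have hintn : ∀ n ∈ Finset.range m, IntegrableOn
      (fun y => (((m - 1).factorial / n.factorial : ℝ) * c ^ n / c ^ m * (w / u) ^ n) *
        (y ^ n * Real.exp (y * ((1 - (m:ℝ)) * w / u)) * fX y)) (Ioi 0) :=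
    fun n hn => ((hint n (Finset.mem_range.1 hn)).const_mul _)
  have hJint : IntegrableOn (fun y => fX y * T y) (Ioi 0) := by
    refine (integrable_finset_sum _ hintn).congr ?_
    refine ((ae_restrict_iff' measurableSet_Ioi).2 (Eventually.of_forall fun y hy => ?_))
    exact (hpt y hy).symm
  -- step B : Tonelli
  have hTnn : ∀ y ∈ Ioi (0:ℝ), 0 ≤ T y := by
    intro y hy
    have hy0 : 0 < w * y / u := div_pos (mul_pos hw hy) hu
    exact setIntegral_nonneg measurableSet_Ioi fun t ht =>
      mul_nonneg (pow_nonneg (hy0.le.trans ht.le) _) (Real.exp_nonneg _)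
  have stepB : (∫ t in Ioi (0:ℝ), FX (u * t / w) * (t ^ (m - 1) * Real.exp (-c * t)))
      = ∫ y in Ioi (0:ℝ), fX y * T y := by
    classical
    set μ := volume.restrict (Ioi (0:ℝ)) with hμ
    have hgmeas : Measurable fun t : ℝ => t ^ (m - 1) * Real.exp (-c * t) := by
      fun_prop
    set H : ℝ → ℝ → ℝ≥0∞ := fun t y =>
      if y * w ≤ u * t then
        ENNReal.ofReal (fX y) * ENNReal.ofReal (t ^ (m - 1) * Real.exp (-c * t))
      else 0 with hH_def
    have hS : MeasurableSet {p : ℝ × ℝ | p.2 * w ≤ u * p.1} :=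
      measurableSet_le (measurable_snd.mul_const w) (measurable_fst.const_mul u)
    have hHmeas : AEMeasurable (Function.uncurry H) (μ.prod μ) := by
      have hbase : AEMeasurable (fun p : ℝ × ℝ =>
          ENNReal.ofReal (fX p.2) *
            ENNReal.ofReal (p.1 ^ (m - 1) * Real.exp (-c * p.1))) (μ.prod μ) :=
        ((ENNReal.measurable_ofReal.comp_aemeasurable hfXmeas).comp_snd).mul
          ((ENNReal.measurable_ofReal.comp hgmeas).aemeasurable.comp_fst)
      have huncurry : Function.uncurry H =
          ({p : ℝ × ℝ | p.2 * w ≤ u * p.1}).indicator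
            (fun p => ENNReal.ofReal (fX p.2) *
              ENNReal.ofReal (p.1 ^ (m - 1) * Real.exp (-c * p.1))) := by
        ext p
        simp [Function.uncurry, hH_def, Set.indicator_apply, mem_setOf_eq]
      rw [huncurry]
      exact hbase.indicator hS
    have hswap := MeasureTheory.lintegral_lintegral_swap hHmeas
    have hL : (∫⁻ t, (∫⁻ y, H t y ∂μ) ∂μ)
        = ∫⁻ t in Ioi (0:ℝ), ENNReal.ofReal
            (FX (u * t / w) * (t ^ (m - 1) * Real.exp (-c * t))) := by
      refine lintegral_congr fun t => ?_
      have hSt : MeasurableSet {y : ℝ | y * w ≤ u * t} :=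
        measurableSet_le (measurable_id.mul_const w) measurable_const
      have e1 : ∀ y : ℝ, H t y = ({y : ℝ | y * w ≤ u * t}).indicator
          (fun y => ENNReal.ofReal (fX y) *
            ENNReal.ofReal (t ^ (m - 1) * Real.exp (-c * t))) y := fun y => by
        simp [hH_def, Set.indicator_apply, mem_setOf_eq]
      rw [lintegral_congr e1, lintegral_indicator hSt, hμ, Measure.restrict_restrict hSt]
      have hsets : {y : ℝ | y * w ≤ u * t} ∩ Ioi 0 = Ioc 0 (u * t / w) := by
        ext y
        simp only [mem_inter_iff, mem_setOf_eq, mem_Ioi, mem_Ioc]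
        constructor
        · rintro ⟨h1, h2⟩; exact ⟨h2, (le_div_iff₀ hw).2 h1⟩
        · rintro ⟨h1, h2⟩; exact ⟨(le_div_iff₀ hw).1 h2, h1⟩
      rw [hsets, lintegral_mul_const' _ _ ENNReal.ofReal_ne_top,
        ← ofReal_integral_eq_lintegral_ofReal (hfXint.mono_set Ioc_subset_Ioi_self)
          (Eventually.of_forall fun y => hf0 y),
        ← hFX (u * t / w), ← ENNReal.ofReal_mul (hFX0 _)]
    have hR : (∫⁻ y, (∫⁻ t, H t y ∂μ) ∂μ)
        = ∫⁻ y in Ioi (0:ℝ), ENNReal.ofReal (fX y * T y) := by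
      rw [hμ]
      refine setLIntegral_congr_fun_ae measurableSet_Ioi (Eventually.of_forall fun y hy => ?_)
      have hy0 : 0 < w * y / u := div_pos (mul_pos hw hy) hu
      have hSt : MeasurableSet {t : ℝ | y * w ≤ u * t} :=
        measurableSet_le measurable_const (measurable_id.const_mul u)
      have e1 : ∀ t : ℝ, H t y = ({t : ℝ | y * w ≤ u * t}).indicator
          (fun t => ENNReal.ofReal (fX y) *
            ENNReal.ofReal (t ^ (m - 1) * Real.exp (-c * t))) t := fun t => by
        simp [hH_def, Set.indicator_apply, mem_setOf_eq]
      rw [lintegral_congr e1, lintegral_indicator hSt, ← hμ, hμ,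
        Measure.restrict_restrict hSt]
      have hsets : {t : ℝ | y * w ≤ u * t} ∩ Ioi 0 = Ici (w * y / u) := by
        ext t
        simp only [mem_inter_iff, mem_setOf_eq, mem_Ioi, mem_Ici]
        constructor
        · rintro ⟨h1, h2⟩
          rw [div_le_iff₀ hu]
          linarith
        · intro h1
          have h2 := (div_le_iff₀ hu).1 h1
          exact ⟨by linarith, lt_of_lt_of_le hy0 h1⟩
      rw [hsets, setLIntegral_congr (Ioi_ae_eq_Ici (a := w * y / u)).symm,
        lintegral_const_mul' _ _ ENNReal.ofReal_ne_top,
        ← ofReal_integral_eq_lintegral_ofReal (tail_integrable c hc m hmn _ hy0.le)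
          ((ae_restrict_iff' measurableSet_Ioi).2 (Eventually.of_forall fun t ht =>
            mul_nonneg (pow_nonneg (hy0.le.trans ht.le) _) (Real.exp_nonneg _))),
        ← ENNReal.ofReal_mul (hf0 y)]
    have hmeasI : AEStronglyMeasurable
        (fun t : ℝ => FX (u * t / w) * (t ^ (m - 1) * Real.exp (-c * t))) μ :=
      ((hFXmeas.comp ((measurable_id.const_mul u).div_const w)).mul hgmeas).aestronglyMeasurable
    have hI := MeasureTheory.integral_eq_lintegral_of_nonneg_ae
      (μ := μ) ((ae_restrict_iff' measurableSet_Ioi).2 (Eventually.of_forall fun t ht =>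
        mul_nonneg (hFX0 _) (mul_nonneg (pow_nonneg ht.le _) (Real.exp_nonneg _)))) hmeasI
    have hJ := MeasureTheory.integral_eq_lintegral_of_nonneg_ae
      (μ := μ) ((ae_restrict_iff' measurableSet_Ioi).2 (Eventually.of_forall fun y hy =>
        mul_nonneg (hf0 y) (hTnn y hy))) hJint.aestronglyMeasurable
    rw [hμ] at hI hJ
    rw [hI, hJ, ← hL, ← hR, hswap]
  -- final computation
  have hrw : ∀ t : ℝ, FX (u * t / w) * (c ^ m / Real.Gamma (m:ℝ) * t ^ (m - 1) *
      Real.exp (-c * t)) = (c ^ m / Real.Gamma (m:ℝ)) *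
      (FX (u * t / w) * (t ^ (m - 1) * Real.exp (-c * t))) := fun t => by ring
  simp_rw [hrw]
  rw [MeasureTheory.integral_const_mul, stepB,
    setIntegral_congr_fun measurableSet_Ioi hpt, integral_finset_sum _ hintn,
    Finset.mul_sum]
  have hΓ : Real.Gamma (m:ℝ) = ((m - 1).factorial : ℝ) := by
    have h1 : (m:ℝ) = ((m - 1 : ℕ) : ℝ) + 1 := by
      rw [Nat.cast_sub hmn]; push_cast; ring
    rw [h1, Real.Gamma_nat_eq_factorial]
  refine Finset.sum_congr rfl fun n hn => ?_
  rw [MeasureTheory.integral_const_mul, hΓ]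
  have h1 : ((m - 1).factorial : ℝ) ≠ 0 := Nat.cast_ne_zero.2 (Nat.factorial_ne_zero _)
  have h2 : (n.factorial : ℝ) ≠ 0 := Nat.cast_ne_zero.2 (Nat.factorial_ne_zero _)
  have h3 : c ≠ 0 := hc.ne'
  have h4 : u ≠ 0 := hu.ne'
  set I := ∫ x in Ioi (0:ℝ), x ^ n * Real.exp (x * ((1 - (m:ℝ)) * w / u)) * fX x with hI
  field_simp
  rw [div_pow, div_mul_eq_mul_div, div_mul_cancel₀ _ (pow_ne_zero n h4)]
  ring
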